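/- arXiv:2003.09672 — 3 statements merged into one kernel-verified Lean document; each statement's English description precedes it below -/
import Mathlib

section
/- Let G be a finite abelian group. Then: (i) for every 𝕋-valued 2-cocycle ψ on G, the map β^ψ(g,h) := ψ(g,h)·conj(ψ(h,g)) is an alternating pairing on G; (ii) every alternating pairing γ on G is of the form γ = β^ψ for some 2-cocycle ψ on G; (iii) two 2-cocycles ψ, ψ' on G satisfy β^ψ = β^{ψ'} if and only if ψ and ψ' are cohomologous. In other words, [ψ] ↦ β^ψ is a group isomorphism from H²(G;𝕋) onto the group of alternating pairings on G. -/
open ComplexConjugate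

/-- `ψ` is a `𝕋`-valued 2-cocycle on the (additive) abelian group `G`. -/
def IsCocycle {G : Type*} [AddCommGroup G] (ψ : G → G → ℂ) : Prop :=
  (∀ g h, ‖ψ g h‖ = 1) ∧
    ∀ g h k, ψ g h * ψ (g + h) k = ψ h k * ψ g (h + k)

/-- `ψ` is a coboundary. -/
def IsCoboundary {G : Type*} [AddCommGroup G] (ψ : G → G → ℂ) : Prop :=
  ∃ f : G → ℂ, (∀ g, ‖f g‖ = 1) ∧
    ∀ g h, ψ g h = f g * f h * conj (f (g + h))

/-- Two 2-cocycles are cohomologous if their pointwise quotient is a coboundary. -/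
def Cohomologous {G : Type*} [AddCommGroup G] (ψ ψ' : G → G → ℂ) : Prop :=
  IsCoboundary fun g h => ψ g h / ψ' g h

/-- A `𝕋`-valued pairing on `G`: multiplicative in each argument. -/
def IsPairing {G : Type*} [AddCommGroup G] (γ : G → G → ℂ) : Prop :=
  (∀ g h, ‖γ g h‖ = 1) ∧
    (∀ g g' h, γ (g + g') h = γ g h * γ g' h) ∧
    (∀ g h h', γ g (h + h') = γ g h * γ g h')

/-- An alternating pairing: a pairing with `γ(g,g) = 1` for all `g`. -/
def IsAlternatingPairing {G : Type*} [AddCommGroup G] (γ : G → G → ℂ) : Prop :=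
  IsPairing γ ∧ ∀ g, γ g g = 1

/-- `β^ψ(g,h) = ψ(g,h) · conj (ψ(h,g))`. -/
noncomputable def beta {G : Type*} [AddCommGroup G] (ψ : G → G → ℂ) (g h : G) : ℂ :=
  ψ g h * conj (ψ h g)

/-! ### helpers -/

lemma abs1_ne_zero {z : ℂ} (h : ‖z‖ = 1) : z ≠ 0 := by
  intro h0; rw [h0] at h; simp at h

lemma conj_eq_inv {z : ℂ} (h : ‖z‖ = 1) : conj z = z⁻¹ := by
  have h0 : z ≠ 0 := abs1_ne_zero h
  field_simp
  rw [mul_comm, Complex.mul_conj]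
  norm_cast
  rw [Complex.normSq_eq_norm_sq, h]; norm_num

lemma mul_conj_self {z : ℂ} (h : ‖z‖ = 1) : z * conj z = 1 := by
  rw [conj_eq_inv h, mul_inv_cancel₀ (abs1_ne_zero h)]

lemma exists_root {z : ℂ} (h : ‖z‖ = 1) {m : ℕ} (hm : 0 < m) :
    ∃ c : ℂ, c ^ m = z ∧ ‖c‖ = 1 := by
  obtain ⟨c, hc⟩ := Complex.isAlgClosed.exists_pow_nat_eq z hm
  refine ⟨c, hc, ?_⟩
  have h1 : ‖c‖ ^ m = 1 := by rw [← norm_pow, hc, h]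
  by_contra hne
  rcases lt_or_gt_of_ne hne with hlt | hgt
  · have := pow_lt_one₀ (norm_nonneg c) hlt hm.ne'
    linarith
  · have := one_lt_pow₀ hgt hm.ne'
    linarith

section Grp
variable {G : Type*} [AddCommGroup G] {ψ : G → G → ℂ}

lemma IsCocycle.ne_zero (hψ : IsCocycle ψ) (g h : G) : ψ g h ≠ 0 :=
  abs1_ne_zero (hψ.1 g h)

lemma IsCocycle.zero_right (hψ : IsCocycle ψ) (g : G) : ψ g 0 = ψ 0 0 := by
  have h := hψ.2 g 0 0
  simp only [add_zero] at h
  exact mul_right_cancel₀ (hψ.ne_zero g 0) h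

lemma IsCocycle.zero_left (hψ : IsCocycle ψ) (g : G) : ψ 0 g = ψ 0 0 := by
  have h := hψ.2 0 0 g
  simp only [zero_add] at h
  exact (mul_right_cancel₀ (hψ.ne_zero 0 g) h).symm

lemma beta_right_mul (hψ : IsCocycle ψ) (g h k : G) :
    beta ψ g (h + k) = beta ψ g h * beta ψ g k := by
  obtain ⟨ha, hc⟩ := hψ
  have hne : ∀ x y : G, ψ x y ≠ 0 := fun x y => abs1_ne_zero (ha x y)
  have hi : ∀ x y : G, conj (ψ x y) = (ψ x y)⁻¹ := fun x y => conj_eq_inv (ha x y)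
  simp only [beta, hi]
  have c1 := hc g h k
  have c2 := hc h k g
  have c3 := hc h g k
  rw [add_comm h g] at c3
  rw [add_comm k g] at c2
  have key : ψ (g+h) k * (ψ g (h+k) * ψ k g * ψ h g) = ψ (g+h) k * (ψ g h * ψ g k * ψ (h+k) g) := by
    linear_combination (-(ψ g k * ψ (h+k) g)) * c1 - (ψ g k * ψ g (h+k)) * c2 + (ψ g (h+k) * ψ k g) * c3
  have key2 := mul_left_cancel₀ (hne (g+h) k) key
  have n1 := hne (h+k) g
  have n2 := hne h g
  have n3 := hne k g
  field_simp
  linear_combination key2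

lemma beta_conj (g h : G) : beta ψ h g = conj (beta ψ g h) := by
  simp [beta, mul_comm]

lemma part_one (hψ : IsCocycle ψ) : IsAlternatingPairing (beta ψ) := by
  have habs : ∀ g h, ‖beta ψ g h‖ = 1 := by
    intro g h
    simp [beta, map_mul, hψ.1]
  have hdiag : ∀ g, beta ψ g g = 1 := fun g => mul_conj_self (hψ.1 g g)
  have hright := beta_right_mul hψ
  refine ⟨⟨habs, ?_, hright⟩, hdiag⟩
  intro g g' h
  have := hright h g g'
  calc beta ψ (g + g') h = conj (beta ψ h (g + g')) := beta_conj ..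
    _ = conj (beta ψ h g * beta ψ h g') := by rw [this]
    _ = conj (beta ψ h g) * conj (beta ψ h g') := by rw [map_mul]
    _ = beta ψ g h * beta ψ g' h := by rw [← beta_conj, ← beta_conj]

end Grp

/-! ### transport -/

section Transport
variable {A G : Type*} [AddCommGroup A] [AddCommGroup G]

lemma IsCocycle.comp {ψ : G → G → ℂ} (hψ : IsCocycle ψ) (φ : A →+ G) :
    IsCocycle fun a b => ψ (φ a) (φ b) := by
  refine ⟨fun a b => hψ.1 _ _, fun a b c => ?_⟩
  simp only [map_add]
  exact hψ.2 _ _ _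

lemma IsCoboundary.of_equiv {ρ : G → G → ℂ} (e : A ≃+ G)
    (h : IsCoboundary fun a b => ρ (e a) (e b)) : IsCoboundary ρ := by
  obtain ⟨f, hf1, hf2⟩ := h
  refine ⟨fun g => f (e.symm g), fun g => hf1 _, fun g h => ?_⟩
  have := hf2 (e.symm g) (e.symm h)
  simp only [AddEquiv.apply_symm_apply] at this
  simp only [this]
  rw [map_add]

lemma IsCoboundary.div_const {ρ : G → G → ℂ} (habs : ‖ρ 0 0‖ = 1)
    (h : IsCoboundary fun g h => ρ g h / ρ 0 0) : IsCoboundary ρ := by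
  obtain ⟨f, hf1, hf2⟩ := h
  have hne : ρ 0 0 ≠ 0 := abs1_ne_zero habs
  refine ⟨fun g => ρ 0 0 * f g, fun g => by simp [map_mul, habs, hf1], fun g h => ?_⟩
  have := hf2 g h
  simp only [map_mul]
  have hcc : ρ 0 0 * conj (ρ 0 0) = 1 := mul_conj_self habs
  field_simp at this
  linear_combination this - (f g * f h * conj (f (g+h)) * ρ 0 0) * hcc

lemma IsCocycle.div_const {ρ : G → G → ℂ} (hρ : IsCocycle ρ) :
    IsCocycle fun g h => ρ g h / ρ 0 0 := by
  have hne : ρ 0 0 ≠ 0 := hρ.ne_zero 0 0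
  refine ⟨fun g h => by rw [norm_div, hρ.1, hρ.1]; norm_num, fun g h k => ?_⟩
  have := hρ.2 g h k
  field_simp
  linear_combination this

end Transport

/-! ### cyclic case -/

lemma cyclic_coboundary_norm {m : ℕ} (hm : 0 < m) (ρ : ZMod m → ZMod m → ℂ)
    (hρ : IsCocycle ρ) (h0 : ρ 0 0 = 1) : IsCoboundary ρ := by
  haveI : NeZero m := ⟨hm.ne'⟩
  have hrow : ∀ x, ρ x 0 = 1 := fun x => (hρ.zero_right x).trans h0
  set P : ℕ → ℂ := fun k => Nat.rec 1 (fun k Pk => Pk * ρ (k : ZMod m) 1) k with hP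
  have hPs : ∀ k, P (k+1) = P k * ρ (k : ZMod m) 1 := fun k => rfl
  have habsP : ∀ k, ‖P k‖ = 1 := by
    intro k; induction k with
    | zero => simp [hP]
    | succ k ih => rw [hPs, norm_mul, ih, hρ.1, one_mul]
  have hPne : ∀ k, P k ≠ 0 := fun k => abs1_ne_zero (habsP k)
  have key : ∀ b a : ℕ, P (a + b) = P a * P b * ρ (a : ZMod m) (b : ZMod m) := by
    intro b
    induction b with
    | zero =>
      intro a
      simp only [Nat.add_zero, Nat.cast_zero, hrow, mul_one]
      simp [hP]
    | succ b ih =>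
      intro a
      have c := hρ.2 (a : ZMod m) (b : ZMod m) 1
      have e1 : a + (b+1) = (a+b)+1 := by omega
      rw [e1, hPs, ih a, hPs]
      have hcast1 : ((a+b : ℕ) : ZMod m) = (a : ZMod m) + b := by push_cast; ring
      have hcast2 : ((b+1 : ℕ) : ZMod m) = (b : ZMod m) + 1 := by push_cast; ring
      rw [hcast1, hcast2]
      linear_combination (P a * P b) * c
  obtain ⟨c, hcm, habsc⟩ := exists_root (habsP m) hm
  have hcne : c ≠ 0 := abs1_ne_zero habsc
  refine ⟨fun g => (P g.val)⁻¹ * c ^ g.val, fun g => ?_, fun g h => ?_⟩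
  · rw [norm_mul, norm_inv, norm_pow, habsP, habsc, one_pow, inv_one, one_mul]
  · have hconjf : ∀ x : ZMod m,
        conj ((P x.val)⁻¹ * c ^ x.val) = ((P x.val)⁻¹ * c ^ x.val)⁻¹ := by
      intro x
      apply conj_eq_inv
      rw [norm_mul, norm_inv, norm_pow, habsP, habsc, one_pow, inv_one, one_mul]
    rw [hconjf]
    have hca : ((g.val : ℕ) : ZMod m) = g := by simp [ZMod.natCast_val, ZMod.cast_id]
    have hcb : ((h.val : ℕ) : ZMod m) = h := by simp [ZMod.natCast_val, ZMod.cast_id]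
    have hk : P (g.val + h.val) = P g.val * P h.val * ρ g h := by
      rw [key h.val g.val, hca, hcb]
    have hv : (g+h).val = (g.val + h.val) % m := ZMod.val_add g h
    rcases lt_or_ge (g.val + h.val) m with hlt | hge
    · have hv' : (g+h).val = g.val + h.val := by rw [hv, Nat.mod_eq_of_lt hlt]
      rw [hv', hk, pow_add]
      field_simp [hPne]
    · have hglt := ZMod.val_lt g
      have hhlt := ZMod.val_lt h
      set s := g.val + h.val - m with hs
      have hab : g.val + h.val = s + m := by omega
      have hslt : s < m := by omega
      have hv' : (g+h).val = s := by
        rw [hv, hab, Nat.add_mod_right, Nat.mod_eq_of_lt hslt]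
      rw [hv']
      have hpow2 : c ^ g.val * c ^ h.val = c ^ s * c ^ m := by
        rw [← pow_add, hab, pow_add]
      have hPab : P (g.val + h.val) = P s * c ^ m := by
        rw [hab, key m s, ZMod.natCast_self, hrow, mul_one, hcm]
      have hk2 : P s * c ^ m = P g.val * P h.val * ρ g h := by
        rw [← hPab]; exact hk
      field_simp [hPne]
      linear_combination (- P s) * hpow2 - c ^ s * hk2

lemma cyclic_coboundary {m : ℕ} (hm : 0 < m) (ρ : ZMod m → ZMod m → ℂ)
    (hρ : IsCocycle ρ) : IsCoboundary ρ := by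
  apply IsCoboundary.div_const (hρ.1 0 0)
  exact cyclic_coboundary_norm hm _ hρ.div_const (div_self (hρ.ne_zero 0 0))

/-! ### product case -/

lemma prod_coboundary {A B : Type*} [AddCommGroup A] [AddCommGroup B]
    (ρ : A × B → A × B → ℂ) (hρ : IsCocycle ρ) (hsym : ∀ g h, ρ g h = ρ h g)
    (hA : IsCoboundary fun a a' : A => ρ (a, 0) (a', 0))
    (hB : IsCoboundary fun b b' : B => ρ (0, b) (0, b')) : IsCoboundary ρ := by
  obtain ⟨fA, hfA1, hfA2⟩ := hA
  obtain ⟨fB, hfB1, hfB2⟩ := hB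
  have hne : ∀ x y : A × B, ρ x y ≠ 0 := hρ.ne_zero
  have habs := hρ.1
  have hconj : ∀ x y : A × B, conj (ρ x y) = (ρ x y)⁻¹ := fun x y => conj_eq_inv (habs x y)
  refine ⟨fun g => fA g.1 * fB g.2 * conj (ρ (g.1, 0) (0, g.2)), fun g => ?_, ?_⟩
  · simp only [norm_mul, Complex.norm_conj]
    rw [hfA1, hfB1, habs]; norm_num
  rintro ⟨a, b⟩ ⟨a', b'⟩
  have n1 := hne ((a, 0) : A × B) ((0, b + b') : A × B)
  have n2 := hne ((a', 0) : A × B) ((0, b + b') : A × B)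
  have n3 := hne ((a', 0) : A × B) ((0, b') : A × B)
  have n4 := hne ((a, 0) : A × B) ((0, b) : A × B)
  have h1 := hρ.2 (a, 0) (0, b) (a', b')
  have h2 := hρ.2 (a', 0) (0, b') (0, b)
  have h3 := hρ.2 (a', 0) (0, b + b') (a, 0)
  have h4 := hρ.2 (a', 0) (a, 0) (0, b + b')
  simp only [Prod.mk_add_mk, add_zero, zero_add] at h1 h2 h3 h4 ⊢
  -- orient symmetric values
  rw [hsym ((a', b') : A × B) ((0, b) : A × B)] at h2
  rw [hsym (((0 : A), b') : A × B) (((0 : A), b) : A × B), add_comm b' b] at h2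
  rw [hsym (((a', b + b')) : A × B) ((a, 0) : A × B)] at h3
  rw [hsym (((0 : A), b + b') : A × B) ((a, (0 : B)) : A × B)] at h3
  rw [hsym ((a', (0 : B)) : A × B) ((a, (0 : B)) : A × B), add_comm a' a] at h4
  have eT' : ρ (a, 0) (a', b + b') * ρ (a', 0) (0, b + b') =
      ρ (a, 0) (a', 0) * ρ (a + a', 0) (0, b + b') := by
    linear_combination h3 - h4
  have key : ρ (a, b) (a', b') * (ρ (a, 0) (0, b) * ρ (a', 0) (0, b')) * ρ (a', 0) (0, b + b') =
      (ρ (a, 0) (a', 0) * ρ (0, b) (0, b') * ρ (a + a', 0) (0, b + b')) * ρ (a', 0) (0, b + b') := by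
    linear_combination (ρ (a', 0) (0, b') * ρ (a', 0) (0, b + b')) * h1
      + (ρ (a, 0) (a', b + b') * ρ (a', 0) (0, b + b')) * h2
      + (ρ (0, b) (0, b') * ρ (a', 0) (0, b + b')) * eT'
  have key2 := mul_right_cancel₀ n2 key
  calc ρ (a, b) (a', b')
      = (fA a * fA a' * conj (fA (a + a'))) * (fB b * fB b' * conj (fB (b + b'))) *
        (conj (ρ (a, 0) (0, b)) * conj (ρ (a', 0) (0, b')) * ρ (a + a', 0) (0, b + b')) := by
        rw [← hfA2, ← hfB2]
        rw [hconj, hconj]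
        field_simp
        linear_combination key2
    _ = _ := by
        simp only [map_mul, Complex.conj_conj]
        ring

/-! ### symmetric cocycles are coboundaries -/

def optionAddEquiv {ι : Type*} (M : Option ι → Type*) [∀ i, AddCommMonoid (M i)] :
    (∀ i, M i) ≃+ M none × ∀ i, M (some i) where
  toFun x := (x none, fun i => x (some i))
  invFun p i := Option.rec p.1 (fun a => p.2 a) i
  left_inv x := by funext i; cases i <;> rfl
  right_inv p := rfl
  map_add' x y := rfl

lemma pi_symm_coboundary (ι : Type) [Finite ι] :
    ∀ (n : ι → ℕ), (∀ i, 0 < n i) →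
    ∀ ρ : (∀ i, ZMod (n i)) → (∀ i, ZMod (n i)) → ℂ, IsCocycle ρ →
    (∀ g h, ρ g h = ρ h g) → IsCoboundary ρ := by
  induction ι using Finite.induction_empty_option with
  | of_equiv e ih =>
    intro n hn ρ hρ hsym
    have E := (RingEquiv.piCongrLeft (fun b => ZMod (n b)) e).toAddEquiv
    apply IsCoboundary.of_equiv E
    exact ih (fun a => n (e a)) (fun a => hn _) (fun g h => ρ (E g) (E h))
      (hρ.comp E.toAddMonoidHom) (fun g h => hsym _ _)
  | h_empty =>
    intro n hn ρ hρ hsym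
    haveI : Subsingleton (∀ i : PEmpty, ZMod (n i)) :=
      ⟨fun a b => funext fun i => i.elim⟩
    refine ⟨fun _ => ρ 0 0, fun g => hρ.1 0 0, fun g h => ?_⟩
    rw [Subsingleton.elim g 0, Subsingleton.elim h 0, add_zero, mul_assoc,
      mul_conj_self (hρ.1 0 0), mul_one]
  | h_option ih =>
    intro n hn ρ hρ hsym
    have E := (optionAddEquiv (fun i => ZMod (n i))).symm
    apply IsCoboundary.of_equiv E
    apply prod_coboundary _ (hρ.comp E.toAddMonoidHom) (fun g h => hsym _ _)
    · exact cyclic_coboundary (hn none) _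
        ((hρ.comp E.toAddMonoidHom).comp (AddMonoidHom.inl _ _))
    · exact ih (fun a => n (some a)) (fun a => hn _) _
        ((hρ.comp E.toAddMonoidHom).comp (AddMonoidHom.inr _ _)) (fun g h => hsym _ _)

lemma symm_coboundary {G : Type*} [AddCommGroup G] [Finite G] (ρ : G → G → ℂ)
    (hρ : IsCocycle ρ) (hsym : ∀ g h, ρ g h = ρ h g) : IsCoboundary ρ := by
  obtain ⟨ι, hι, n, hn, ⟨e⟩⟩ := AddCommGroup.equiv_directSum_zmod_of_finite' G
  let E1 : (DirectSum ι fun i => ZMod (n i)) ≃+ ∀ i, ZMod (n i) :=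
    AddEquiv.mk' DFinsupp.equivFunOnFintype (fun x y => rfl)
  have E := (e.trans E1).symm
  apply IsCoboundary.of_equiv E
  exact pi_symm_coboundary ι n (fun i => by have := hn i; omega) _
    (hρ.comp E.toAddMonoidHom) (fun g h => hsym _ _)

/-! ### pairing facts -/

section Pairing
variable {G : Type*} [AddCommGroup G] {γ : G → G → ℂ}

lemma IsAlternatingPairing.ne_zero' (hγ : IsAlternatingPairing γ) (g h : G) : γ g h ≠ 0 :=
  abs1_ne_zero (hγ.1.1 g h)

lemma IsAlternatingPairing.zero_left' (hγ : IsAlternatingPairing γ) (h : G) : γ 0 h = 1 := by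
  have h2 := hγ.1.2.1 0 0 h
  rw [zero_add] at h2
  exact (mul_left_cancel₀ (hγ.ne_zero' 0 h) (by rw [mul_one, ← h2])).symm

lemma IsAlternatingPairing.zero_right' (hγ : IsAlternatingPairing γ) (g : G) : γ g 0 = 1 := by
  have h2 := hγ.1.2.2 g 0 0
  rw [zero_add] at h2
  exact (mul_left_cancel₀ (hγ.ne_zero' g 0) (by rw [mul_one, ← h2])).symm

lemma IsAlternatingPairing.skew (hγ : IsAlternatingPairing γ) (g h : G) :
    γ g h * γ h g = 1 := by
  have e := hγ.2 (g + h)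
  rw [hγ.1.2.1 g h (g + h), hγ.1.2.2 g g h, hγ.1.2.2 h g h, hγ.2 g, hγ.2 h,
    one_mul, mul_one] at e
  exact e

lemma IsAlternatingPairing.conj_eq (hγ : IsAlternatingPairing γ) (g h : G) :
    conj (γ g h) = γ h g := by
  rw [conj_eq_inv (hγ.1.1 g h)]
  exact (inv_eq_of_mul_eq_one_right (hγ.skew g h))

lemma IsAlternatingPairing.nsmul_left (hγ : IsAlternatingPairing γ) (k : ℕ) (g h : G) :
    γ (k • g) h = γ g h ^ k := by
  induction k with
  | zero => rw [zero_smul, pow_zero, hγ.zero_left']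
  | succ k ih => rw [succ_nsmul, hγ.1.2.1, ih, pow_succ]

lemma IsAlternatingPairing.nsmul_right (hγ : IsAlternatingPairing γ) (k : ℕ) (g h : G) :
    γ g (k • h) = γ g h ^ k := by
  induction k with
  | zero => rw [zero_smul, pow_zero, hγ.zero_right']
  | succ k ih => rw [succ_nsmul, hγ.1.2.2, ih, pow_succ]

lemma IsAlternatingPairing.smul_diag (hγ : IsAlternatingPairing γ) (k l : ℕ) (w : G) :
    γ (k • w) (l • w) = 1 := by
  rw [hγ.nsmul_left, hγ.nsmul_right, hγ.2, one_pow, one_pow]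

lemma IsAlternatingPairing.sum_left {ι : Type*} (hγ : IsAlternatingPairing γ)
    (s : Finset ι) (x : ι → G) (h : G) :
    γ (∑ i ∈ s, x i) h = ∏ i ∈ s, γ (x i) h := by
  classical
  induction s using Finset.induction_on with
  | empty => simp [hγ.zero_left']
  | insert a s' hmem ih =>
                      rw [Finset.sum_insert hmem, Finset.prod_insert hmem, hγ.1.2.1, ih]

lemma IsAlternatingPairing.sum_right {ι : Type*} (hγ : IsAlternatingPairing γ)
    (s : Finset ι) (g : G) (y : ι → G) :
    γ g (∑ i ∈ s, y i) = ∏ i ∈ s, γ g (y i) := by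
  classical
  induction s using Finset.induction_on with
  | empty => simp [hγ.zero_right']
  | insert a s' hmem ih =>
                      rw [Finset.sum_insert hmem, Finset.prod_insert hmem, hγ.1.2.2, ih]

end Pairing

/-! ### part (ii): pairing lift -/

lemma pairing_lift_pi (ι : Type*) [Fintype ι] [LinearOrder ι] (n : ι → ℕ) (hn : ∀ i, 0 < n i)
    (γ : (∀ i, ZMod (n i)) → (∀ i, ZMod (n i)) → ℂ) (hγ : IsAlternatingPairing γ) :
    ∃ ψ, IsCocycle ψ ∧ beta ψ = γ := by
  classical
  set ψ : (∀ i, ZMod (n i)) → (∀ i, ZMod (n i)) → ℂ := fun g h =>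
    ∏ i, ∏ j, if i < j then γ (Pi.single i (g i)) (Pi.single j (h j)) else 1 with hψdef
  have hsingle : ∀ (i : ι) (v : ZMod (n i)),
      Pi.single i v = v.val • (Pi.single i (1 : ZMod (n i)) : ∀ j, ZMod (n j)) := by
    intro i v
    haveI : NeZero (n i) := ⟨(hn i).ne'⟩
    funext j
    rcases eq_or_ne j i with rfl | hj
    · simp [Pi.single_eq_same, nsmul_eq_mul, ZMod.natCast_val, ZMod.cast_id]
    · simp [Pi.single_eq_of_ne hj]
  have hdiag : ∀ (i : ι) (g h : ∀ i, ZMod (n i)),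
      γ (Pi.single i (g i)) (Pi.single i (h i)) = 1 := by
    intro i g h
    rw [hsingle i (g i), hsingle i (h i), hγ.smul_diag]
  have habs : ∀ g h, ‖ψ g h‖ = 1 := by
    intro g h
    rw [hψdef]
    rw [norm_prod]
    refine Finset.prod_eq_one fun i _ => ?_
    rw [norm_prod]
    refine Finset.prod_eq_one fun j _ => ?_
    split_ifs
    · exact hγ.1.1 _ _
    · exact norm_one
  have hml : ∀ g g' h, ψ (g + g') h = ψ g h * ψ g' h := by
    intro g g' h
    rw [hψdef, ← Finset.prod_mul_distrib]
    refine Finset.prod_congr rfl fun i _ => ?_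
    rw [← Finset.prod_mul_distrib]
    refine Finset.prod_congr rfl fun j _ => ?_
    by_cases hij : i < j
    · simp only [hij, if_true, Pi.add_apply, Pi.single_add, hγ.1.2.1]
    · simp [hij]
  have hmr : ∀ g h h', ψ g (h + h') = ψ g h * ψ g h' := by
    intro g h h'
    rw [hψdef, ← Finset.prod_mul_distrib]
    refine Finset.prod_congr rfl fun i _ => ?_
    rw [← Finset.prod_mul_distrib]
    refine Finset.prod_congr rfl fun j _ => ?_
    by_cases hij : i < j
    · simp only [hij, if_true, Pi.add_apply, Pi.single_add, hγ.1.2.2]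
    · simp [hij]
  refine ⟨ψ, ⟨habs, fun g h k => by rw [hml g h k, hmr g h k]; ring⟩, ?_⟩
  funext g h
  have hconjpart : conj (ψ h g) =
      ∏ i, ∏ j, if j < i then γ (Pi.single i (g i)) (Pi.single j (h j)) else 1 := by
    rw [hψdef, map_prod (starRingEnd ℂ)]
    rw [show (∏ i, ∏ j, if j < i then γ (Pi.single i (g i)) (Pi.single j (h j)) else 1)
        = ∏ j, ∏ i, if j < i then γ (Pi.single i (g i)) (Pi.single j (h j)) else 1 from
      Finset.prod_comm]
    refine Finset.prod_congr rfl fun i _ => ?_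
    rw [map_prod (starRingEnd ℂ)]
    refine Finset.prod_congr rfl fun j _ => ?_
    rw [apply_ite (starRingEnd ℂ), map_one, hγ.conj_eq]
  show ψ g h * conj (ψ h g) = γ g h
  rw [hconjpart, hψdef]
  rw [← Finset.prod_mul_distrib]
  have hcomb : ∀ i : ι, (∏ j, if i < j then γ (Pi.single i (g i)) (Pi.single j (h j)) else 1) *
      (∏ j, if j < i then γ (Pi.single i (g i)) (Pi.single j (h j)) else 1)
      = ∏ j, γ (Pi.single i (g i)) (Pi.single j (h j)) := by
    intro i
    rw [← Finset.prod_mul_distrib]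
    refine Finset.prod_congr rfl fun j _ => ?_
    rcases lt_trichotomy i j with hl | he | hg
    · rw [if_pos hl, if_neg (asymm hl), mul_one]
    · subst he
      simp only [lt_irrefl, if_false, one_mul]
      exact (hdiag i g h).symm
    · rw [if_neg (asymm hg), if_pos hg, one_mul]
  calc (∏ i, (∏ j, if i < j then γ (Pi.single i (g i)) (Pi.single j (h j)) else 1) *
      (∏ j, if j < i then γ (Pi.single i (g i)) (Pi.single j (h j)) else 1))
      = ∏ i, ∏ j, γ (Pi.single i (g i)) (Pi.single j (h j)) := by
        exact Finset.prod_congr rfl fun i _ => hcomb i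
    _ = ∏ i, γ (Pi.single i (g i)) h := by
        refine Finset.prod_congr rfl fun i _ => ?_
        rw [← hγ.sum_right Finset.univ _ (fun j => Pi.single j (h j)),
          Finset.univ_sum_single]
    _ = γ g h := by
        rw [← hγ.sum_left Finset.univ (fun i => Pi.single i (g i)) h,
          Finset.univ_sum_single]

/-! ### wrappers -/

lemma part_two {G : Type*} [AddCommGroup G] [Finite G] (γ : G → G → ℂ)
    (hγ : IsAlternatingPairing γ) : ∃ ψ : G → G → ℂ, IsCocycle ψ ∧ beta ψ = γ := by
  obtain ⟨ι, hι, n, hn, ⟨e⟩⟩ := AddCommGroup.equiv_directSum_zmod_of_finite' G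
  let E1 : (DirectSum ι fun i => ZMod (n i)) ≃+ ∀ i, ZMod (n i) :=
    AddEquiv.mk' DFinsupp.equivFunOnFintype (fun x y => rfl)
  let E := e.trans E1
  letI : LinearOrder ι := LinearOrder.lift' (Fintype.equivFin ι) (Fintype.equivFin ι).injective
  have hγ' : IsAlternatingPairing (fun x y => γ (E.symm x) (E.symm y)) := by
    refine ⟨⟨fun x y => hγ.1.1 _ _, fun x x' y => ?_, fun x y y' => ?_⟩, fun x => hγ.2 _⟩
    · simp only [map_add]; exact hγ.1.2.1 _ _ _
    · simp only [map_add]; exact hγ.1.2.2 _ _ _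
  obtain ⟨ψ', hψ', hb⟩ := pairing_lift_pi ι n (fun i => by have := hn i; omega) _ hγ'
  refine ⟨fun g h => ψ' (E g) (E h), hψ'.comp E.toAddMonoidHom, ?_⟩
  funext g h
  have hb2 := congrFun (congrFun hb (E g)) (E h)
  simpa [beta, AddEquiv.symm_apply_apply] using hb2

lemma part_three_fwd {G : Type*} [AddCommGroup G] [Finite G] (ψ ψ' : G → G → ℂ)
    (h : IsCocycle ψ) (h' : IsCocycle ψ') (hb : beta ψ = beta ψ') :
    Cohomologous ψ ψ' := by
  apply symm_coboundary
  · refine ⟨fun g k => by rw [norm_div, h.1, h'.1]; norm_num, fun g k l => ?_⟩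
    rw [div_mul_div_comm, div_mul_div_comm, h.2, h'.2]
  · intro g k
    have hbgk := congrFun (congrFun hb g) k
    simp only [beta] at hbgk
    rw [conj_eq_inv (h.1 k g), conj_eq_inv (h'.1 k g)] at hbgk
    have n1 := h.ne_zero k g
    have n2 := h'.ne_zero k g
    have n3 := h'.ne_zero g k
    have n4 := h.ne_zero g k
    field_simp at hbgk ⊢
    linear_combination hbgk

lemma part_three_bwd {G : Type*} [AddCommGroup G] (ψ ψ' : G → G → ℂ)
    (_h : IsCocycle ψ) (h' : IsCocycle ψ') (hc : Cohomologous ψ ψ') :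
    beta ψ = beta ψ' := by
  obtain ⟨f, hf1, hf2⟩ := hc
  funext g k
  have e1 := hf2 g k
  have e2 := hf2 k g
  rw [add_comm k g] at e2
  have n1 := h'.ne_zero g k
  have n2 := h'.ne_zero k g
  rw [div_eq_iff n1] at e1
  rw [div_eq_iff n2] at e2
  simp only [beta, e1, e2, map_mul, Complex.conj_conj]
  have u1 := mul_conj_self (hf1 g)
  have u2 := mul_conj_self (hf1 k)
  have u3 := mul_conj_self (hf1 (g + k))
  linear_combination (f k * conj (f k) * f (g+k) * conj (f (g+k)) * ψ' g k * conj (ψ' k g)) * u1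
    + (f (g+k) * conj (f (g+k)) * ψ' g k * conj (ψ' k g)) * u2
    + (ψ' g k * conj (ψ' k g)) * u3

/-- For a finite abelian group `G`: (i) `β^ψ` is an alternating pairing;
(ii) every alternating pairing arises as `β^ψ`; (iii) `β^ψ = β^{ψ'}` iff `ψ` and
`ψ'` are cohomologous.  Thus `[ψ] ↦ β^ψ` is an isomorphism from `H²(G;𝕋)` onto
the group of alternating pairings on `G`. -/
theorem stmt2 {G : Type*} [AddCommGroup G] [Fintype G] :
    (∀ ψ : G → G → ℂ, IsCocycle ψ → IsAlternatingPairing (beta ψ)) ∧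
    (∀ γ : G → G → ℂ, IsAlternatingPairing γ →
      ∃ ψ : G → G → ℂ, IsCocycle ψ ∧ beta ψ = γ) ∧
    (∀ ψ ψ' : G → G → ℂ, IsCocycle ψ → IsCocycle ψ' →
      (beta ψ = beta ψ' ↔ Cohomologous ψ ψ')) :=
  ⟨fun _ hψ => part_one hψ, fun γ hγ => part_two γ hγ,
    fun ψ ψ' h h' => ⟨part_three_fwd ψ ψ' h h', part_three_bwd ψ ψ' h h'⟩⟩
end

section
/- Let G be a finite abelian group and ψ a 𝕋-valued 2-cocycle on G which is symmetric, i.e. ψ(g,h) = ψ(h,g) for all g,h ∈ G. Then ψ is a coboundary: there exists f : G → 𝕋 with ψ(g,h) = f(g)·f(h)·conj(f(g+h)) for all g,h ∈ G. -/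
open ComplexConjugate

noncomputable instance : DivisibleBy (Additive Circle) ℤ where
  div z n := Additive.ofMul (Circle.exp (Complex.arg (z.toMul : ℂ) / n))
  div_zero z := by
    simp only [Int.cast_zero, div_zero, Circle.exp_zero]
    rfl
  div_cancel {n} z hn := by
    have hn' : (n : ℝ) ≠ 0 := Int.cast_ne_zero.mpr hn
    have hpow : ∀ (m : ℤ) (θ : ℝ), Circle.exp θ ^ m = Circle.exp (m * θ) := by
      intro m θ
      have h := congrArg Additive.toMul (map_zsmul Circle.expHom m θ)
      rw [toMul_zsmul] at h
      calc Circle.exp θ ^ m = Additive.toMul (Circle.expHom θ) ^ m := rfl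
        _ = Additive.toMul (Circle.expHom ((m : ℤ) • θ)) := h.symm
        _ = Circle.exp ((m : ℝ) * θ) := by rw [zsmul_eq_mul]; rfl
    have h3 : Additive.toMul (n • Additive.ofMul (Circle.exp (Complex.arg (z.toMul : ℂ) / n)))
        = Additive.toMul z := by
      rw [toMul_zsmul]
      simp only [toMul_ofMul]
      rw [hpow, mul_div_cancel₀ _ hn', Circle.exp_arg]
    exact Additive.toMul.injective h3

universe u

theorem key_coboundary {G : Type u} [AddCommGroup G] (Ψ : G → G → Circle)
    (hco : ∀ g h k, Ψ g h * Ψ (g + h) k = Ψ h k * Ψ g (h + k))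
    (hz : ∀ g, Ψ 0 g = 1) (hz' : ∀ g, Ψ g 0 = 1)
    (hs : ∀ g h, Ψ g h = Ψ h g) :
    ∃ F : G → Circle, ∀ g h, Ψ g h = F g * F h * (F (g + h))⁻¹ := by
  have hcoC : ∀ g h k : G, (Ψ g h : ℂ) * (Ψ (g + h) k : ℂ)
      = (Ψ h k : ℂ) * (Ψ g (h + k) : ℂ) := by
    intro g h k
    have := congrArg (fun z : Circle => (z : ℂ)) (hco g h k)
    simpa using this
  have hinv : ∀ g : G, Ψ g (-g) = Ψ (-g) g := fun g => hs g (-g)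
  letI zeroE : Zero (G × Circle) := ⟨((0 : G), (1 : Circle))⟩
  letI addE : Add (G × Circle) := ⟨fun a b => (a.1 + b.1, a.2 * b.2 * Ψ a.1 b.1)⟩
  letI negE : Neg (G × Circle) := ⟨fun a => (-a.1, (a.2 * Ψ a.1 (-a.1))⁻¹)⟩
  letI E : AddCommGroup (G × Circle) :=
  { add := (· + ·)
    zero := (0 : G × Circle)
    neg := (- ·)
    nsmul := nsmulRec
    zsmul := zsmulRec
    add_assoc := by
      intro a b c
      refine Prod.ext (add_assoc _ _ _) (Circle.coe_injective ?_)
      show (((a.2 * b.2 * Ψ a.1 b.1) * c.2 * Ψ (a.1 + b.1) c.1 : Circle) : ℂ)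
          = ((a.2 * (b.2 * c.2 * Ψ b.1 c.1) * Ψ a.1 (b.1 + c.1) : Circle) : ℂ)
      push_cast
      linear_combination (a.2 : ℂ) * (b.2 : ℂ) * (c.2 : ℂ) * hcoC a.1 b.1 c.1
    zero_add := by
      intro a
      refine Prod.ext (zero_add _) ?_
      show (1 : Circle) * a.2 * Ψ 0 a.1 = a.2
      rw [hz, one_mul, mul_one]
    add_zero := by
      intro a
      refine Prod.ext (add_zero _) ?_
      show a.2 * 1 * Ψ a.1 0 = a.2
      rw [hz', mul_one, mul_one]
    neg_add_cancel := by
      intro a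
      refine Prod.ext (neg_add_cancel _) ?_
      show (a.2 * Ψ a.1 (-a.1))⁻¹ * a.2 * Ψ (-a.1) a.1 = 1
      rw [← hinv, mul_assoc, inv_mul_cancel]
    add_comm := by
      intro a b
      refine Prod.ext (add_comm _ _) ?_
      show a.2 * b.2 * Ψ a.1 b.1 = b.2 * a.2 * Ψ b.1 a.1
      rw [hs a.1 b.1, mul_comm a.2 b.2] }
  -- the additive map `Circle → E`, `s ↦ (0, s)`
  let i : ULift.{u} (Additive Circle) →ₗ[ℤ] (G × Circle) :=
    (AddMonoidHom.mk' (fun s => ((0 : G), s.down.toMul)) (by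
      intro s t
      refine Prod.ext (zero_add (0:G)).symm ?_
      show (s.down + t.down).toMul = s.down.toMul * t.down.toMul * Ψ 0 0
      rw [hz, mul_one, toMul_add])).toIntLinearMap
  have hi : Function.Injective i := by
    intro s t hst
    have h2 := congrArg Prod.snd hst
    have : s.down.toMul = t.down.toMul := h2
    exact congrArg ULift.up (Additive.toMul.injective this)
  obtain ⟨r, hr⟩ :=
    (Module.Baer.of_divisible (ULift.{u} (Additive Circle))).injective.out i hi LinearMap.id
  refine ⟨fun g => (r ((g, 1) : G × Circle)).down.toMul, ?_⟩
  intro g h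
  have hadd : (((g, 1) : G × Circle) + ((h, 1) : G × Circle))
      = ((g + h, 1) : G × Circle) + i (ULift.up (Additive.ofMul (Ψ g h))) := by
    refine Prod.ext ?_ ?_
    · show g + h = (g + h) + 0
      rw [add_zero]
    · show (1 : Circle) * 1 * Ψ g h = 1 * (Additive.ofMul (Ψ g h)).toMul * Ψ (g + h) 0
      simp [hz']
  have e1 := congrArg r hadd
  rw [map_add, map_add, hr] at e1
  have e2 := congrArg (fun x : ULift.{u} (Additive Circle) => x.down.toMul) e1
  simp only [LinearMap.id_coe, id_eq] at e2
  have e3 : (r ((g, 1) : G × Circle)).down.toMul * (r ((h, 1) : G × Circle)).down.toMul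
      = (r ((g + h, 1) : G × Circle)).down.toMul * Ψ g h := by
    simpa [toMul_add] using e2
  rw [e3, mul_comm _ (Ψ g h), mul_inv_cancel_right]

/-- Every symmetric 2-cocycle on a finite abelian group is a coboundary. -/
theorem stmt4 {G : Type*} [AddCommGroup G] [Fintype G] (ψ : G → G → ℂ)
    (hψ : IsCocycle ψ) (hsym : ∀ g h : G, ψ g h = ψ h g) :
    ∃ f : G → ℂ, (∀ g, ‖f g‖ = 1) ∧
      ∀ g h : G, ψ g h = f g * f h * conj (f (g + h)) := by
  obtain ⟨habs, hco⟩ := hψ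
  have hne : ∀ g h, ψ g h ≠ 0 := by
    intro g h h0
    have := habs g h
    rw [h0] at this
    simp at this
  have hc0 : ∀ k : G, ψ 0 k = ψ 0 0 := by
    intro k
    have h1 := hco 0 0 k
    rw [zero_add, zero_add] at h1
    exact (mul_right_cancel₀ (hne 0 k) h1).symm
  set c := ψ 0 0 with hc
  have hcne : c ≠ 0 := hne 0 0
  have habsc : ‖c‖ = 1 := habs 0 0
  have hmem : ∀ g h : G, ψ g h / c ∈ Metric.sphere (0 : ℂ) 1 := by
    intro g h
    rw [Metric.mem_sphere, dist_zero_right, norm_div, habs, habsc, div_one]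
  let Ψ : G → G → Circle := fun g h => ⟨ψ g h / c, hmem g h⟩
  have hΨcoe : ∀ g h, (Ψ g h : ℂ) = ψ g h / c := fun _ _ => rfl
  have hco' : ∀ g h k, Ψ g h * Ψ (g + h) k = Ψ h k * Ψ g (h + k) := by
    intro g h k
    apply Circle.coe_injective
    show (ψ g h / c) * (ψ (g + h) k / c) = (ψ h k / c) * (ψ g (h + k) / c)
    rw [div_mul_div_comm, div_mul_div_comm, hco g h k]
  have hz : ∀ g, Ψ 0 g = 1 := by
    intro g
    apply Circle.coe_injective
    show ψ 0 g / c = 1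
    rw [hc0 g]; exact div_self hcne
  have hz' : ∀ g, Ψ g 0 = 1 := by
    intro g
    apply Circle.coe_injective
    show ψ g 0 / c = 1
    rw [hsym g 0, hc0 g]; exact div_self hcne
  have hs : ∀ g h, Ψ g h = Ψ h g := by
    intro g h
    apply Circle.coe_injective
    show ψ g h / c = ψ h g / c
    rw [hsym g h]
  obtain ⟨F, hF⟩ := key_coboundary Ψ hco' hz hz' hs
  refine ⟨fun g => c * (F g : ℂ), ?_, ?_⟩
  · intro g
    rw [norm_mul, habsc, Circle.norm_coe, one_mul]
  · intro g h
    have h2 : (Ψ g h : ℂ) = (F g : ℂ) * (F h : ℂ) * ((F (g + h) : ℂ))⁻¹ := by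
      rw [hF g h]
      push_cast
      ring
    have hconjc : c * conj c = 1 := by
      rw [Complex.mul_conj, Complex.normSq_eq_norm_sq, habsc]
      norm_num
    have hconjF : conj ((F (g + h) : ℂ)) = ((F (g + h) : ℂ))⁻¹ := by
      rw [← Circle.coe_inv_eq_conj, Circle.coe_inv]
    have hψΨ : ψ g h = c * (Ψ g h : ℂ) := by
      rw [hΨcoe g h, mul_comm, div_mul_cancel₀ _ hcne]
    show ψ g h = (c * (F g : ℂ)) * (c * (F h : ℂ)) * conj (c * (F (g + h) : ℂ))
    rw [map_mul, hconjF, hψΨ, h2]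
    linear_combination (-(c * (F g : ℂ) * (F h : ℂ) * ((F (g + h) : ℂ))⁻¹)) * hconjc
end

section
/- Let G be a finite abelian group and ⟨·,·⟩ a non-degenerate symmetric pairing on G. Then: (i) there exists at least one quadratic form on G realizing ⟨·,·⟩; (ii) if q is one such quadratic form, then the set of all quadratic forms realizing ⟨·,·⟩ is exactly {ψ·q : ψ ∈ Hom(G,𝕋) with ψ² = 1}; (iii) consequently, the number of quadratic forms realizing ⟨·,·⟩ equals the number of elements g ∈ G with 2g = 0 (i.e. the order of the largest elementary 2-subgroup of G). -/
open ComplexConjugate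

/-- A non-degenerate symmetric pairing. -/
def IsNondegSymmPairing {G : Type*} [AddCommGroup G] (γ : G → G → ℂ) : Prop :=
  IsPairing γ ∧ (∀ g h, γ g h = γ h g) ∧ ∀ g, (∀ h, γ g h = 1) → g = 0

/-- `q` is a quadratic form realizing the pairing `γ`:  `q` is `𝕋`-valued,
`q(-g) = q(g)`, and `γ(g,h) = q(g)·q(h)·conj(q(g+h))`. -/
def Realizes {G : Type*} [AddCommGroup G] (q : G → ℂ) (γ : G → G → ℂ) : Prop :=
  (∀ g, ‖q g‖ = 1) ∧ (∀ g, q (-g) = q g) ∧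
    ∀ g h, γ g h = q g * q h * conj (q (g + h))

/-- A `𝕋`-valued character of `G`. -/
def IsChar {G : Type*} [AddCommGroup G] (ψ : G → ℂ) : Prop :=
  (∀ g, ‖ψ g‖ = 1) ∧ ∀ g h, ψ (g + h) = ψ g * ψ h

namespace Stmt10Aux

lemma ne_zero_of_abs_one {z : ℂ} (h : ‖z‖ = 1) : z ≠ 0 := by
  intro h0; rw [h0] at h; simp at h

lemma conj_eq_inv {z : ℂ} (h : ‖z‖ = 1) : conj z = z⁻¹ :=
  (Complex.inv_eq_conj h).symm

lemma mul_conj_self {z : ℂ} (h : ‖z‖ = 1) : z * conj z = 1 := by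
  rw [conj_eq_inv h, mul_inv_cancel₀ (ne_zero_of_abs_one h)]

lemma abs_of_sq_one {z : ℂ} (h : z ^ 2 = 1) : ‖z‖ = 1 := by
  have h2 : (z - 1) * (z + 1) = 0 := by linear_combination h
  rcases mul_eq_zero.1 h2 with h3 | h3
  · rw [sub_eq_zero.1 h3]; simp
  · rw [eq_neg_of_add_eq_zero_left h3]; simp

lemma exists_sqrt {c : ℂ} (hc : ‖c‖ = 1) :
    ∃ t : ℂ, t ^ 2 = c ∧ ‖t‖ = 1 := by
  obtain ⟨t, ht⟩ : ∃ t : ℂ, t ^ 2 = c := IsAlgClosed.exists_pow_nat_eq c two_pos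
  refine ⟨t, ht, ?_⟩
  have h2 : ‖t‖ ^ 2 = 1 := by rw [← norm_pow, ht, hc]
  nlinarith [norm_nonneg t]

section pairing

variable {G : Type*} [AddCommGroup G] {γ : G → G → ℂ}

variable (h1 : ∀ g h, ‖γ g h‖ = 1)
    (h2 : ∀ g g' h, γ (g + g') h = γ g h * γ g' h)
    (h3 : ∀ g h h', γ g (h + h') = γ g h * γ g h')

include h1 h2 in
lemma zero_left (h : G) : γ 0 h = 1 := by
  have := h2 0 0 h
  rw [add_zero] at this
  have hne := ne_zero_of_abs_one (h1 0 h)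
  field_simp at this
  exact this.symm

include h1 h3 in
lemma zero_right (g : G) : γ g 0 = 1 := by
  have := h3 g 0 0
  rw [add_zero] at this
  have hne := ne_zero_of_abs_one (h1 g 0)
  field_simp at this
  exact this.symm

include h1 h2 in
lemma neg_left (g h : G) : γ (-g) h = (γ g h)⁻¹ := by
  have := h2 g (-g) h
  rw [add_neg_cancel, zero_left h1 h2] at this
  rw [eq_comm, mul_comm] at this
  exact eq_inv_of_mul_eq_one_left this

include h1 h3 in
lemma neg_right (g h : G) : γ g (-h) = (γ g h)⁻¹ := by
  have := h3 g h (-h)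
  rw [add_neg_cancel, zero_right h1 h3] at this
  rw [eq_comm, mul_comm] at this
  exact eq_inv_of_mul_eq_one_left this

include h1 h2 in
lemma nsmul_left (m : ℕ) (g h : G) : γ (m • g) h = γ g h ^ m := by
  induction m with
  | zero => simpa using zero_left h1 h2 h
  | succ k ih => rw [succ_nsmul, h2, ih, pow_succ]

include h1 h3 in
lemma nsmul_right (m : ℕ) (g h : G) : γ g (m • h) = γ g h ^ m := by
  induction m with
  | zero => simpa using zero_right h1 h3 g
  | succ k ih => rw [succ_nsmul, h3, ih, pow_succ]

end pairing


lemma cyclic (n : ℕ) [NeZero n] (γ : ZMod n → ZMod n → ℂ)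
    (h1 : ∀ g h, ‖γ g h‖ = 1)
    (h2 : ∀ g g' h, γ (g + g') h = γ g h * γ g' h)
    (h3 : ∀ g h h', γ g (h + h') = γ g h * γ g h') :
    ∃ q : ZMod n → ℂ, Realizes q γ := by
  set c := γ 1 1 with hc
  have hcn : c ^ n = 1 := by
    have hn1 : (n • (1 : ZMod n)) = 0 := by simp
    rw [hc, ← nsmul_left h1 h2 n 1 1, hn1, zero_left h1 h2]
  obtain ⟨t, ht2, ht1⟩ := exists_sqrt (h1 1 1)
  have htne : t ≠ 0 := ne_zero_of_abs_one ht1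
  set u := t⁻¹ with hu
  have hu1 : ‖u‖ = 1 := by rw [hu, norm_inv, ht1, inv_one]
  have hune : u ≠ 0 := ne_zero_of_abs_one hu1
  have hu2 : u ^ 2 = c⁻¹ := by rw [hu, inv_pow, ht2]
  have hut : u * t = 1 := by rw [hu, inv_mul_cancel₀ htne]
  have hu2n : u ^ (2 * n) = 1 := by
    rw [pow_mul, hu2, inv_pow, hcn, inv_one]
  have hcu : conj u = t := by rw [conj_eq_inv hu1, hu, inv_inv]
  have hval : ∀ x : ZMod n, (x.val • (1 : ZMod n)) = x := by
    intro x
    rw [nsmul_eq_mul, mul_one]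
    exact ZMod.natCast_rightInverse x
  have hγval : ∀ x y : ZMod n, γ x y = c ^ (x.val * y.val) := by
    intro x y
    have e0 : γ x y = (γ 1 1 ^ y.val) ^ x.val := by
      conv_lhs => rw [← hval x, ← hval y]
      rw [nsmul_left h1 h2, nsmul_right h1 h3]
    rw [e0, ← hc, ← pow_mul, Nat.mul_comm]
  refine ⟨fun x => u ^ (x.val * (x.val + n)), ?_, ?_, ?_⟩
  · intro x
    rw [norm_pow, hu1, one_pow]
  · intro x
    by_cases hx : x = 0
    · rw [hx, neg_zero]
    · have hneg : (-x).val = n - x.val := by rw [ZMod.neg_val, if_neg hx]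
      have halt : x.val < n := ZMod.val_lt x
      simp only [hneg]
      set a := x.val with ha
      set b := n - a with hb
      have key2 : b * (b + n) + 2 * n * (2 * a) = a * (a + n) + 2 * n * n := by
        have hle : a ≤ n := halt.le
        zify [hle, hb]
        ring
      calc u ^ (b * (b + n))
          = u ^ (b * (b + n)) * (u ^ (2 * n)) ^ (2 * a) := by rw [hu2n, one_pow, mul_one]
        _ = u ^ (b * (b + n) + 2 * n * (2 * a)) := by rw [pow_add, pow_mul u (2 * n) (2 * a)]
        _ = u ^ (a * (a + n) + 2 * n * n) := by rw [key2]
        _ = u ^ (a * (a + n)) := by rw [pow_add, pow_mul u (2 * n) n, hu2n, one_pow, mul_one]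
  · intro x y
    have hs : (x + y).val = (x.val + y.val) % n := ZMod.val_add x y
    set a := x.val with ha
    set b := y.val with hb
    set s := (a + b) % n with hsdef
    set k := (a + b) / n with hk
    have hd : n * k + s = a + b := Nat.div_add_mod _ n
    have key : a * (a + n) + b * (b + n) + 2 * (a * b)
        = s * (s + n) + n * (2 * (k * s) + n * (k * (k + 1))) := by
      have e1 : a * (a + n) + b * (b + n) + 2 * (a * b)
          = (a + b) * (a + b) + (a + b) * n := by ring
      rw [e1, ← hd]; ring
    have hpow1 : u ^ (n * (2 * (k * s) + n * (k * (k + 1)))) = 1 := by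
      obtain ⟨m, hm⟩ := Nat.even_mul_succ_self k
      have he : n * (2 * (k * s) + n * (k * (k + 1))) = 2 * n * (k * s + n * m) := by
        rw [hm]; ring
      rw [he, pow_mul u (2 * n), hu2n, one_pow]
    have hmain : u ^ (a * (a + n)) * u ^ (b * (b + n)) * u ^ (2 * (a * b))
        = u ^ (s * (s + n)) := by
      rw [← pow_add, ← pow_add, key, pow_add, hpow1, mul_one]
    have h6 : u ^ (2 * (a * b)) = (c ^ (a * b))⁻¹ := by
      rw [pow_mul, hu2, inv_pow]
    rw [hγval x y]
    simp only [hs]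
    rw [map_pow, hcu]
    have hc0 : c ^ (a * b) ≠ 0 := pow_ne_zero _ (ne_zero_of_abs_one (h1 1 1))
    calc c ^ (a * b)
        = c ^ (a * b) * ((u * t) ^ (s * (s + n))) := by rw [hut, one_pow, mul_one]
      _ = c ^ (a * b) * u ^ (s * (s + n)) * t ^ (s * (s + n)) := by rw [mul_pow]; ring
      _ = c ^ (a * b) * (u ^ (a * (a + n)) * u ^ (b * (b + n)) * u ^ (2 * (a * b)))
            * t ^ (s * (s + n)) := by rw [hmain]
      _ = u ^ (a * (a + n)) * u ^ (b * (b + n)) * t ^ (s * (s + n)) := by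
            rw [h6]; field_simp

lemma quad_add {G : Type*} [AddCommGroup G] {γ : G → G → ℂ} {q : G → ℂ}
    (hq : Realizes q γ) (x y : G) : q (x + y) = q x * q y * conj (γ x y) := by
  obtain ⟨ha, _, hb⟩ := hq
  have h := congrArg (starRingEnd ℂ) (hb x y)
  simp only [map_mul, Complex.conj_conj] at h
  rw [conj_eq_inv (ha x), conj_eq_inv (ha y)] at h
  have hx := ne_zero_of_abs_one (ha x)
  have hy := ne_zero_of_abs_one (ha y)
  field_simp at h
  linear_combination -h

lemma prodCase {G H : Type*} [AddCommGroup G] [AddCommGroup H]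
    (γ : G × H → G × H → ℂ)
    (h1 : ∀ g h, ‖γ g h‖ = 1)
    (h2 : ∀ g g' h, γ (g + g') h = γ g h * γ g' h)
    (h3 : ∀ g h h', γ g (h + h') = γ g h * γ g h')
    (hsym : ∀ a b, γ a b = γ b a)
    (qG : G → ℂ) (hqG : Realizes qG (fun g g' => γ (g, 0) (g', 0)))
    (qH : H → ℂ) (hqH : Realizes qH (fun h h' => γ (0, h) (0, h'))) :
    ∃ q : G × H → ℂ, Realizes q γ := by
  refine ⟨fun p => qG p.1 * qH p.2 * conj (γ (p.1, 0) (0, p.2)), ?_, ?_, ?_⟩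
  · intro p
    simp [norm_mul, Complex.norm_conj, hqG.1, hqH.1, h1]
  · rintro ⟨g, h⟩
    have e1 : ((-(g, h) : G × H)) = ((-g, -h) : G × H) := rfl
    rw [e1]
    simp only
    rw [hqG.2.1, hqH.2.1]
    have e2 : ((-g : G), (0 : H)) = -(g, (0 : H)) := by
      rw [Prod.neg_mk, neg_zero]
    have e3 : ((0 : G), (-h : H)) = -((0 : G), h) := by
      rw [Prod.neg_mk, neg_zero]
    rw [e2, e3, neg_left h1 h2, neg_right h1 h3, inv_inv]
  · rintro ⟨g, h⟩ ⟨g', h'⟩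
    -- abbreviations
    have hGadd := quad_add hqG g g'
    have hHadd := quad_add hqH h h'
    have hsum : ((g, h) : G × H) + (g', h') = (g + g', h + h') := rfl
    simp only [hsum]
    rw [hGadd, hHadd]
    -- expand γ on sums
    have egL : ((g + g' : G), (0 : H)) = (g, (0:H)) + (g', 0) := by
      rw [Prod.mk_add_mk, add_zero]
    have ehL : ((0 : G), (h + h' : H)) = ((0:G), h) + (0, h') := by
      rw [Prod.mk_add_mk, add_zero]
    have hcross : γ (g + g', 0) (0, h + h') =
        γ (g, 0) (0, h) * γ (g, 0) (0, h') * γ (g', 0) (0, h) * γ (g', 0) (0, h') := by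
      rw [egL, h2, ehL, h3, h3]; ring
    have hLHS : γ ((g, h) : G × H) (g', h') =
        γ (g, 0) (g', 0) * γ (g, 0) (0, h') * γ (g', 0) (0, h) * γ (0, h) (0, h') := by
      have e4 : ((g, h) : G × H) = (g, (0:H)) + ((0:G), h) := by
        rw [Prod.mk_add_mk, add_zero, zero_add]
      have e5 : ((g', h') : G × H) = (g', (0:H)) + ((0:G), h') := by
        rw [Prod.mk_add_mk, add_zero, zero_add]
      rw [e4, e5, h2, h3, h3]
      rw [hsym ((0:G), h) (g', (0:H))]
      ring
    rw [hLHS, hcross]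
    simp only [map_mul, Complex.conj_conj]
    -- replace all conj by inverses
    rw [conj_eq_inv (hqG.1 g), conj_eq_inv (hqG.1 g'), conj_eq_inv (hqH.1 h),
      conj_eq_inv (hqH.1 h'), conj_eq_inv (h1 (g,0) (0,h)), conj_eq_inv (h1 (g',0) (0,h'))]
    have n1 := ne_zero_of_abs_one (hqG.1 g)
    have n2 := ne_zero_of_abs_one (hqG.1 g')
    have n3 := ne_zero_of_abs_one (hqH.1 h)
    have n4 := ne_zero_of_abs_one (hqH.1 h')
    have n5 := ne_zero_of_abs_one (h1 (g,(0:H)) ((0:G),h))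
    have n6 := ne_zero_of_abs_one (h1 (g',(0:H)) ((0:G),h'))
    have n7 := ne_zero_of_abs_one (h1 (g,(0:H)) (g',(0:H)))
    have n8 := ne_zero_of_abs_one (h1 ((0:G),h) ((0:G),h'))
    have n9 := ne_zero_of_abs_one (h1 (g,(0:H)) ((0:G),h'))
    have n10 := ne_zero_of_abs_one (h1 (g',(0:H)) ((0:G),h))
    field_simp

lemma transport {G H : Type*} [AddCommGroup G] [AddCommGroup H] (e : G ≃+ H)
    (γ : G → G → ℂ) (q : H → ℂ)
    (hq : Realizes q (fun a b => γ (e.symm a) (e.symm b))) :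
    Realizes (fun g => q (e g)) γ := by
  obtain ⟨ha, hn, hb⟩ := hq
  refine ⟨fun g => ha (e g), fun g => ?_, fun g h => ?_⟩
  · show q (e (-g)) = q (e g)
    rw [map_neg, hn]
  have := hb (e g) (e h)
  simp only [AddEquiv.symm_apply_apply] at this
  rw [this, ← map_add]

lemma piCase : ∀ (m : ℕ) (n : Fin m → ℕ), (∀ i, n i ≠ 0) →
    ∀ (γ : (∀ i, ZMod (n i)) → (∀ i, ZMod (n i)) → ℂ),
    (∀ g h, ‖γ g h‖ = 1) →
    (∀ g g' h, γ (g + g') h = γ g h * γ g' h) →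
    (∀ g h h', γ g (h + h') = γ g h * γ g h') →
    (∀ a b, γ a b = γ b a) →
    ∃ q, Realizes q γ := by
  intro m
  induction m with
  | zero =>
    intro n _ γ h1 h2 _ _
    have hz : ∀ a : (∀ i : Fin 0, ZMod (n i)), a = 0 := fun a => Subsingleton.elim _ _
    refine ⟨fun _ => 1, fun g => by simp, fun g => rfl, fun a b => ?_⟩
    rw [hz a, hz b, zero_left h1 h2]
    simp
  | succ m ih =>
    intro n hn γ h1 h2 h3 hsym
    have hNZ : NeZero (n 0) := ⟨hn 0⟩
    let E : (∀ i : Fin (m + 1), ZMod (n i)) ≃+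
        (ZMod (n 0) × ∀ i : Fin m, ZMod (n i.succ)) :=
      AddEquiv.mk' ⟨fun f => (f 0, fun i => f i.succ),
        fun p => Fin.cons p.1 p.2,
        fun f => Fin.cons_self_tail f,
        fun p => by ext <;> simp⟩ (fun f g => rfl)
    set γ' : (ZMod (n 0) × ∀ i : Fin m, ZMod (n i.succ)) →
        (ZMod (n 0) × ∀ i : Fin m, ZMod (n i.succ)) → ℂ :=
      fun a b => γ (E.symm a) (E.symm b) with hγ'
    have h1' : ∀ a b, ‖γ' a b‖ = 1 := fun a b => h1 _ _
    have h2' : ∀ a a' b, γ' (a + a') b = γ' a b * γ' a' b := by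
      intro a a' b; rw [hγ']; simp only [map_add]; exact h2 _ _ _
    have h3' : ∀ a b b', γ' a (b + b') = γ' a b * γ' a b' := by
      intro a b b'; rw [hγ']; simp only [map_add]; exact h3 _ _ _
    have hsym' : ∀ a b, γ' a b = γ' b a := fun a b => hsym _ _
    obtain ⟨qG, hqG⟩ := cyclic (n 0) (fun g g' => γ' (g, 0) (g', 0))
      (fun g g' => h1' _ _)
      (fun g g' h => by
        show γ' (g + g', 0) (h, 0) = γ' (g, 0) (h, 0) * γ' (g', 0) (h, 0)
        have e6 : ((g + g' : ZMod (n 0)), (0 : ∀ i : Fin m, ZMod (n i.succ)))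
            = (g, 0) + (g', 0) := by rw [Prod.mk_add_mk, add_zero]
        rw [e6, h2'])
      (fun g h h' => by
        show γ' (g, 0) (h + h', 0) = γ' (g, 0) (h, 0) * γ' (g, 0) (h', 0)
        have e6 : ((h + h' : ZMod (n 0)), (0 : ∀ i : Fin m, ZMod (n i.succ)))
            = (h, 0) + (h', 0) := by rw [Prod.mk_add_mk, add_zero]
        rw [e6, h3'])
    obtain ⟨qH, hqH⟩ := ih (fun i => n i.succ) (fun i => hn i.succ)
      (fun h h' => γ' (0, h) (0, h'))
      (fun h h' => h1' _ _)
      (fun h h' b => by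
        show γ' (0, h + h') (0, b) = γ' (0, h) (0, b) * γ' (0, h') (0, b)
        have e6 : ((0 : ZMod (n 0)), h + h') = ((0 : ZMod (n 0)), h) + (0, h') := by
          rw [Prod.mk_add_mk, add_zero]
        rw [e6, h2'])
      (fun h b b' => by
        show γ' (0, h) (0, b + b') = γ' (0, h) (0, b) * γ' (0, h) (0, b')
        have e6 : ((0 : ZMod (n 0)), b + b') = ((0 : ZMod (n 0)), b) + (0, b') := by
          rw [Prod.mk_add_mk, add_zero]
        rw [e6, h3'])
      (fun a b => hsym' _ _)
    obtain ⟨q', hq'⟩ := prodCase γ' h1' h2' h3' hsym' qG hqG qH hqH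
    exact ⟨fun g => q' (E g), transport E γ q' hq'⟩

lemma existsQuad {G : Type*} [AddCommGroup G] [Fintype G] (γ : G → G → ℂ)
    (hp : IsPairing γ) (hsym : ∀ g h, γ g h = γ h g) : ∃ q, Realizes q γ := by
  obtain ⟨h1, h2, h3⟩ := hp
  obtain ⟨ι, hι, n, hn, ⟨e⟩⟩ := AddCommGroup.equiv_directSum_zmod_of_finite' G
  haveI := hι
  let e2 := DirectSum.addEquivProd (fun i => ZMod (n i))
  let e3 : ι ≃ Fin (Fintype.card ι) := Fintype.equivFin ι
  let E4 : (∀ i : ι, ZMod (n i)) ≃+ (∀ k : Fin (Fintype.card ι), ZMod (n (e3.symm k))) :=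
    AddEquiv.mk' (Equiv.piCongrLeft' (fun i => ZMod (n i)) e3) (fun f g => rfl)
  let E : G ≃+ (∀ k : Fin (Fintype.card ι), ZMod (n (e3.symm k))) := (e.trans e2).trans E4
  obtain ⟨q, hq⟩ := piCase (Fintype.card ι) (fun k => n (e3.symm k))
    (fun k => Nat.ne_zero_of_lt (hn (e3.symm k)))
    (fun a b => γ (E.symm a) (E.symm b))
    (fun a b => h1 _ _)
    (fun a a' b => by simp only [map_add]; exact h2 _ _ _)
    (fun a b b' => by simp only [map_add]; exact h3 _ _ _)
    (fun a b => hsym _ _)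
  exact ⟨fun g => q (E g), transport E γ q hq⟩


lemma conj_of_sq_one {z : ℂ} (h : z ^ 2 = 1) : conj z = z := by
  have h2 : (z - 1) * (z + 1) = 0 := by linear_combination h
  rcases mul_eq_zero.1 h2 with h3 | h3
  · rw [sub_eq_zero.1 h3]; simp
  · rw [eq_neg_of_add_eq_zero_left h3]; simp

lemma quad_zero {G : Type*} [AddCommGroup G] {γ : G → G → ℂ}
    (h1 : ∀ g h, ‖γ g h‖ = 1)
    (h2 : ∀ g g' h, γ (g + g') h = γ g h * γ g' h)
    {q : G → ℂ} (hq : Realizes q γ) : q 0 = 1 := by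
  have h := hq.2.2 0 0
  rw [add_zero, zero_left h1 h2] at h
  have hm := mul_conj_self (hq.1 0)
  rw [mul_assoc, hm, mul_one] at h
  exact h.symm

lemma char_zero {G : Type*} [AddCommGroup G] {ψ : G → ℂ} (hψ : IsChar ψ) : ψ 0 = 1 := by
  have h := hψ.2 0 0
  rw [add_zero] at h
  have hne := ne_zero_of_abs_one (hψ.1 0)
  field_simp at h
  exact h.symm

lemma realizes_iff {G : Type*} [AddCommGroup G] {γ : G → G → ℂ}
    (hγ : IsNondegSymmPairing γ) {q : G → ℂ} (hq : Realizes q γ) (q' : G → ℂ) :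
    Realizes q' γ ↔ ∃ ψ : G → ℂ, IsChar ψ ∧ (∀ g, ψ g ^ 2 = 1) ∧ q' = fun g => ψ g * q g := by
  obtain ⟨⟨h1, h2, h3⟩, hsym, hnd⟩ := hγ
  constructor
  · intro hq'
    set ψ : G → ℂ := fun g => q' g * conj (q g) with hψdef
    have habs : ∀ g, ‖ψ g‖ = 1 := by
      intro g
      show ‖q' g * conj (q g)‖ = 1
      rw [norm_mul, Complex.norm_conj, hq.1, hq'.1, mul_one]
    have hchar : ∀ g h, ψ (g + h) = ψ g * ψ h := by
      intro g h
      show q' (g + h) * conj (q (g + h)) = q' g * conj (q g) * (q' h * conj (q h))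
      rw [quad_add hq g h, quad_add hq' g h]
      simp only [map_mul, Complex.conj_conj]
      have hm := mul_conj_self (h1 g h)
      linear_combination (q' g * q' h * conj (q g) * conj (q h)) * hm
    have hnegψ : ∀ g, ψ (-g) = ψ g := by
      intro g
      show q' (-g) * conj (q (-g)) = q' g * conj (q g)
      rw [hq.2.1, hq'.2.1]
    have hzero : ψ 0 = 1 := by
      show q' 0 * conj (q 0) = 1
      rw [quad_zero h1 h2 hq, quad_zero h1 h2 hq']
      simp
    have hsq : ∀ g, ψ g ^ 2 = 1 := by
      intro g
      have h := hchar g (-g)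
      rw [add_neg_cancel, hzero, hnegψ] at h
      rw [pow_two]
      exact h.symm
    refine ⟨ψ, ⟨habs, hchar⟩, hsq, ?_⟩
    funext g
    show q' g = ψ g * q g
    show q' g = q' g * conj (q g) * q g
    rw [mul_assoc, mul_comm (conj (q g)) (q g), mul_conj_self (hq.1 g), mul_one]
  · rintro ⟨ψ, ⟨habs, hchar⟩, hsq, rfl⟩
    have hzero : ψ 0 = 1 := char_zero ⟨habs, hchar⟩
    have hnegψ : ∀ g, ψ (-g) = ψ g := by
      intro g
      have h := hchar g (-g)
      rw [add_neg_cancel, hzero] at h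
      have hne := ne_zero_of_abs_one (habs g)
      have h2' : ψ g * ψ (-g) = ψ g * ψ g := by
        rw [← h, ← pow_two]
        exact (hsq g).symm
      exact mul_left_cancel₀ hne h2'
    refine ⟨?_, ?_, ?_⟩
    · intro g
      show ‖ψ g * q g‖ = 1
      rw [norm_mul, habs, hq.1, mul_one]
    · intro g
      show ψ (-g) * q (-g) = ψ g * q g
      rw [hnegψ, hq.2.1]
    · intro g h
      show γ g h = ψ g * q g * (ψ h * q h) * conj (ψ (g + h) * q (g + h))
      rw [hq.2.2 g h]
      simp only [map_mul]
      rw [conj_of_sq_one (hsq (g + h)), hchar g h]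
      have e2 : (ψ g * ψ h) * (ψ g * ψ h) = 1 := by
        rw [← hchar, ← pow_two]
        exact hsq _
      linear_combination (-(q g * q h * conj (q (g + h)))) * e2

lemma card_aux {G : Type*} [AddCommGroup G] [Fintype G] (γ : G → G → ℂ)
    (hγ : IsNondegSymmPairing γ) {q₀ : G → ℂ} (hq₀ : Realizes q₀ γ) :
    Nat.card {q : G → ℂ // Realizes q γ} = Nat.card {g : G // g + g = 0} := by
  classical
  obtain ⟨⟨h1, h2, h3⟩, hsym, hnd⟩ := hγ
  have hγ' : IsNondegSymmPairing γ := ⟨⟨h1, h2, h3⟩, hsym, hnd⟩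
  -- Step 1: realizing forms ≃ square-one characters
  let F : {ψ : G → ℂ // IsChar ψ ∧ ∀ g, ψ g ^ 2 = 1} → {q : G → ℂ // Realizes q γ} :=
    fun ψ => ⟨fun g => ψ.1 g * q₀ g,
      (realizes_iff hγ' hq₀ _).2 ⟨ψ.1, ψ.2.1, ψ.2.2, rfl⟩⟩
  have hFbij : Function.Bijective F := by
    constructor
    · rintro ⟨ψ, hψ⟩ ⟨ψ', hψ'⟩ hF
      have := congrArg Subtype.val hF
      refine Subtype.ext (funext fun g => ?_)
      have hg := congrFun this g
      have hne := ne_zero_of_abs_one (hq₀.1 g)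
      exact mul_right_cancel₀ hne hg
    · rintro ⟨q, hq⟩
      obtain ⟨ψ, hψc, hψsq, hqeq⟩ := (realizes_iff hγ' hq₀ q).1 hq
      exact ⟨⟨ψ, hψc, hψsq⟩, Subtype.ext hqeq.symm⟩
  -- Step 2: G ≃ AddChar G ℂ via the pairing
  let Φ : G → AddChar G ℂ := fun g =>
    { toFun := γ g
      map_zero_eq_one' := zero_right h1 h3 g
      map_add_eq_mul' := h3 g }
  have hΦinj : Function.Injective Φ := by
    intro g g' hgg
    have hall : ∀ h, γ (g + -g') h = 1 := by
      intro h
      have hvals : γ g h = γ g' h := DFunLike.congr_fun hgg h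
      rw [h2, neg_left h1 h2, hvals, mul_inv_cancel₀ (ne_zero_of_abs_one (h1 g' h))]
    exact add_neg_eq_zero.mp (hnd _ hall)
  have hΦbij : Function.Bijective Φ :=
    (Fintype.bijective_iff_injective_and_card Φ).2 ⟨hΦinj, AddChar.card_eq.symm⟩
  let E0 : G ≃ AddChar G ℂ := Equiv.ofBijective Φ hΦbij
  have hE0 : ∀ (g : G) (h : G), (E0 g) h = γ g h := fun g h => rfl
  let E2a : {g : G // g + g = 0} ≃ {c : AddChar G ℂ // ∀ h, c h ^ 2 = 1} :=
    E0.subtypeEquiv (by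
      intro g
      constructor
      · intro hg h
        rw [hE0, pow_two, ← h2, hg, zero_left h1 h2]
      · intro hsq
        refine hnd _ (fun h => ?_)
        rw [h2, ← pow_two, ← hE0]
        exact hsq h)
  -- Step 3: AddChar square-one ≃ IsChar square-one
  let E2b : {c : AddChar G ℂ // ∀ h, c h ^ 2 = 1} ≃
      {ψ : G → ℂ // IsChar ψ ∧ ∀ g, ψ g ^ 2 = 1} :=
    { toFun := fun c => ⟨⇑c.1,
        ⟨⟨fun g => abs_of_sq_one (c.2 g), fun g h => c.1.map_add_eq_mul g h⟩, c.2⟩⟩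
      invFun := fun ψ => ⟨{ toFun := ψ.1
                            map_zero_eq_one' := char_zero ψ.2.1
                            map_add_eq_mul' := ψ.2.1.2 }, ψ.2.2⟩
      left_inv := fun c => Subtype.ext (DFunLike.ext' rfl)
      right_inv := fun ψ => rfl }
  calc Nat.card {q : G → ℂ // Realizes q γ}
      = Nat.card {ψ : G → ℂ // IsChar ψ ∧ ∀ g, ψ g ^ 2 = 1} :=
        (Nat.card_congr (Equiv.ofBijective F hFbij)).symm
    _ = Nat.card {c : AddChar G ℂ // ∀ h, c h ^ 2 = 1} := (Nat.card_congr E2b).symm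
    _ = Nat.card {g : G // g + g = 0} := (Nat.card_congr E2a).symm

end Stmt10Aux

/-- Lemma 4(a).  For a non-degenerate symmetric pairing `⟨·,·⟩` on a finite
abelian group `G`: (i) some quadratic form realizes it; (ii) if `q` realizes it,
the realizing quadratic forms are exactly `ψ·q` for characters `ψ` with `ψ² = 1`;
(iii) their number is the number of `g ∈ G` with `2g = 0`. -/
theorem stmt10 {G : Type*} [AddCommGroup G] [Fintype G]
    (γ : G → G → ℂ) (hγ : IsNondegSymmPairing γ) :
    (∃ q : G → ℂ, Realizes q γ) ∧
    (∀ q : G → ℂ, Realizes q γ →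
      ∀ q' : G → ℂ, (Realizes q' γ ↔
        ∃ ψ : G → ℂ, IsChar ψ ∧ (∀ g, ψ g ^ 2 = 1) ∧ q' = fun g => ψ g * q g)) ∧
    Nat.card {q : G → ℂ // Realizes q γ} = Nat.card {g : G // g + g = 0} := by
  obtain ⟨q₀, hq₀⟩ := Stmt10Aux.existsQuad γ hγ.1 hγ.2.1
  exact ⟨⟨q₀, hq₀⟩, fun q hq q' => Stmt10Aux.realizes_iff hγ hq q',
    Stmt10Aux.card_aux γ hγ hq₀⟩
end
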